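/- Fix an integer t ≥ 1, a finite set V, and a function u : {1,…,t} → V. Let G_0, G_1, …, G_t be weighted directed graphs, each on a subset of V with positive edge weights, such that for every i ∈ {1,…,t} the induced weighted subgraphs of G_{i−1} and of G_i on V ∖ {u(i)} coincide. Say that a vertex x is updated at step t' ∈ {1,…,t} if x = u(s) for some s ∈ D(t') with s ≥ 1. Let p be a path of G_t each of whose vertices is updated at some step in {1,…,t}, and let t_p be the largest step in {1,…,t} at which some vertex of p is updated. If p is a shortest path in G_{t''} for some t'' with t_p ≤ t'' ≤ t, then t_p ∈ Prior-times(t), and p is a shortest path in the induced weighted subgraph of G_{t_p} on the vertices of G_{t_p} other than u(t_p+1), …, u(t). -/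

import Mathlib

namespace Apasp

/-- A weighted directed graph on a subset of the vertex type `V`. -/
structure WDigraph (V : Type*) where
  verts : Finset V
  edges : Finset (V × V)
  edges_sub : edges ⊆ verts ×ˢ verts
  w : V × V → ℝ
  w_pos : ∀ e ∈ edges, 0 < w e

namespace WDigraph

variable {V : Type*}

/-- The list of consecutive vertex pairs (edges) of a vertex list. -/
def pathEdges (p : List V) : List (V × V) := p.zip p.tail

/-- `p` is a path of `G` (a nonempty vertex list whose vertices are in `G`
and whose consecutive pairs are edges of `G`). -/
def IsPath (G : WDigraph V) (p : List V) : Prop :=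
  p ≠ [] ∧ (∀ v ∈ p, v ∈ G.verts) ∧ ∀ e ∈ pathEdges p, e ∈ G.edges

/-- The weight of a path: the sum of the weights of its edges. -/
def weight (G : WDigraph V) (p : List V) : ℝ :=
  ((pathEdges p).map G.w).sum

/-- `p` is a path of `G` from `x` to `y`. -/
def IsPathFT (G : WDigraph V) (p : List V) (x y : V) : Prop :=
  G.IsPath p ∧ p.head? = some x ∧ p.getLast? = some y

/-- `p` is a shortest path of `G` from `x` to `y`. -/
def IsSPFT (G : WDigraph V) (p : List V) (x y : V) : Prop :=
  G.IsPathFT p x y ∧ ∀ q, G.IsPathFT q x y → G.weight p ≤ G.weight q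

/-- `p` is a shortest path of `G` (between its endpoints). -/
def IsSP (G : WDigraph V) (p : List V) : Prop :=
  ∃ x y, G.IsSPFT p x y

/-- The shortest-path distance from `x` to `y` in `G`. -/
noncomputable def dist (G : WDigraph V) (x y : V) : ℝ :=
  sInf {r | ∃ p, G.IsPathFT p x y ∧ G.weight p = r}

/-- `p` is a locally shortest path from `x` to `y`: removing the first edge,
resp. the last edge, yields a shortest path. -/
def IsLSP (G : WDigraph V) (p : List V) (x y : V) : Prop :=
  G.IsPathFT p x y ∧ G.IsSP p.tail ∧ G.IsSP p.dropLast

/-- The first edge of the list `p` is `(x, a)`. -/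
def FirstEdge (p : List V) (x a : V) : Prop := ∃ q, p = x :: a :: q

/-- The last edge of the list `p` is `(b, y)`. -/
def LastEdge (p : List V) (b y : V) : Prop := ∃ r, p = r ++ [b, y]

/-- `((x,a),(b,y),wt)` is a locally shortest tuple of `G`. -/
def IsLST (G : WDigraph V) (x a b y : V) (wt : ℝ) : Prop :=
  ∃ p, G.IsLSP p x y ∧ FirstEdge p x a ∧ LastEdge p b y ∧ G.weight p = wt

/-- `((x,a),(b,y),wt)` is a locally shortest tuple of `G`, witnessed by a
locally shortest path containing the vertex `v`. -/
def IsLSTThru (G : WDigraph V) (v x a b y : V) (wt : ℝ) : Prop :=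
  ∃ p, G.IsLSP p x y ∧ FirstEdge p x a ∧ LastEdge p b y ∧ G.weight p = wt ∧ v ∈ p

/-- The set of edges of `G` that lie on shortest paths through the vertex `v`. -/
def spEdgesThru (G : WDigraph V) (v : V) : Set (V × V) :=
  {e | ∃ p, G.IsSP p ∧ v ∈ p ∧ e ∈ pathEdges p}

/-- `ν*(G)`: the maximum over vertices `v` of the number of distinct edges
lying on shortest paths through `v`. -/
noncomputable def nuStar (G : WDigraph V) : ℕ :=
  G.verts.sup fun v => (G.spEdgesThru v).ncard

/-- `m*(G)`: the number of edges of `G` lying on at least one shortest path. -/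
noncomputable def mStar (G : WDigraph V) : ℕ :=
  {e | ∃ p, G.IsSP p ∧ e ∈ pathEdges p}.ncard

/-- The induced weighted subgraph of `G` on the vertex set `S`. -/
def induce [DecidableEq V] (G : WDigraph V) (S : Finset V) : WDigraph V where
  verts := G.verts ∩ S
  edges := G.edges.filter fun e => e.1 ∈ S ∧ e.2 ∈ S
  edges_sub := by
    intro e he
    rw [Finset.mem_filter] at he
    have h := G.edges_sub he.1
    rw [Finset.mem_product] at h ⊢
    exact ⟨Finset.mem_inter.mpr ⟨h.1, he.2.1⟩, Finset.mem_inter.mpr ⟨h.2, he.2.2⟩⟩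
  w := G.w
  w_pos := fun e he => G.w_pos e (Finset.mem_filter.mp he).1

/-- Two weighted digraphs coincide: same vertices, same edges, and the same
weights on the edges. -/
def Coincide (G H : WDigraph V) : Prop :=
  G.verts = H.verts ∧ G.edges = H.edges ∧ ∀ e ∈ G.edges, G.w e = H.w e

end WDigraph

/-- `setBit t`: the position of the least significant 1 in the binary
representation of `t`, i.e. the largest `k` with `2^k ∣ t` (for `t ≥ 1`). -/
def setBit (t : ℕ) : ℕ := Nat.findGreatest (fun k => 2 ^ k ∣ t) t

/-- `D t = {t - 2^(setBit t) + 1, …, t}`. -/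
def D (t : ℕ) : Finset ℕ := Finset.Icc (t - 2 ^ setBit t + 1) t

/-- `priorTimes t`: the set of numbers obtained from `t` by choosing a bit
position `i` at which `t` has a 1 and zeroing all bits below position `i`. -/
def priorTimes (t : ℕ) : Finset ℕ :=
  ((Finset.range (t + 1)).filter fun i => t.testBit i).image fun i => 2 ^ i * (t / 2 ^ i)


namespace WDigraph
variable {V : Type*}

lemma mem_of_mem_pathEdges {p : List V} {e : V × V} (h : e ∈ pathEdges p) :
    e.1 ∈ p ∧ e.2 ∈ p := by
  obtain ⟨e1, e2⟩ := e
  obtain ⟨h1, h2⟩ := List.of_mem_zip h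
  exact ⟨h1, List.mem_of_mem_tail h2⟩

lemma coincide_refl {G : WDigraph V} : Coincide G G :=
  ⟨Eq.refl _, Eq.refl _, fun _ _ => Eq.refl _⟩

lemma Coincide.symm {G H : WDigraph V} (h : Coincide G H) : Coincide H G :=
  ⟨h.1.symm, h.2.1.symm, fun e he => (h.2.2 e (h.2.1 ▸ he)).symm⟩

lemma Coincide.trans {G H K : WDigraph V} (h1 : Coincide G H) (h2 : Coincide H K) :
    Coincide G K :=
  ⟨h1.1.trans h2.1, h1.2.1.trans h2.2.1,
    fun e he => (h1.2.2 e he).trans (h2.2.2 e (h1.2.1 ▸ he))⟩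

lemma Coincide.weight_eq {G H : WDigraph V} (h : Coincide G H) {p : List V}
    (hp : ∀ e ∈ pathEdges p, e ∈ G.edges) : G.weight p = H.weight p := by
  unfold weight
  congr 1
  exact List.map_congr_left fun e he => h.2.2 e (hp e he)

lemma Coincide.isPathFT {G H : WDigraph V} (h : Coincide G H) {p : List V} {x y : V}
    (hp : G.IsPathFT p x y) : H.IsPathFT p x y :=
  ⟨⟨hp.1.1, fun v hv => h.1 ▸ hp.1.2.1 v hv, fun e he => h.2.1 ▸ hp.1.2.2 e he⟩, hp.2⟩

lemma Coincide.isSP {G H : WDigraph V} (h : Coincide G H) {p : List V}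
    (hp : G.IsSP p) : H.IsSP p := by
  obtain ⟨x, y, ⟨hft, hmin⟩⟩ := hp
  refine ⟨x, y, h.isPathFT hft, fun q hq => ?_⟩
  have hqG : G.IsPathFT q x y := h.symm.isPathFT hq
  calc H.weight p = G.weight p := (h.weight_eq hft.1.2.2).symm
    _ ≤ G.weight q := hmin q hqG
    _ = H.weight q := h.weight_eq hqG.1.2.2

variable [DecidableEq V]

lemma coincide_induce_mono {G H : WDigraph V} {A S : Finset V}
    (h : Coincide (G.induce A) (H.induce A)) (hS : S ⊆ A) :
    Coincide (G.induce S) (H.induce S) := by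
  have hv : G.verts ∩ A = H.verts ∩ A := h.1
  have he : (G.edges.filter fun e => e.1 ∈ A ∧ e.2 ∈ A)
      = H.edges.filter fun e => e.1 ∈ A ∧ e.2 ∈ A := h.2.1
  refine ⟨?_, ?_, ?_⟩
  · show G.verts ∩ S = H.verts ∩ S
    ext x
    have := Finset.ext_iff.mp hv x
    simp only [Finset.mem_inter] at this ⊢
    constructor
    · rintro ⟨h1, h2⟩; exact ⟨(this.mp ⟨h1, hS h2⟩).1, h2⟩
    · rintro ⟨h1, h2⟩; exact ⟨(this.mpr ⟨h1, hS h2⟩).1, h2⟩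
  · ext e
    have := Finset.ext_iff.mp he e
    simp only [Finset.mem_filter] at this
    show e ∈ G.edges.filter _ ↔ e ∈ H.edges.filter _
    simp only [Finset.mem_filter]
    constructor
    · rintro ⟨h1, h2, h3⟩; exact ⟨(this.mp ⟨h1, hS h2, hS h3⟩).1, h2, h3⟩
    · rintro ⟨h1, h2, h3⟩; exact ⟨(this.mpr ⟨h1, hS h2, hS h3⟩).1, h2, h3⟩
  · intro e heS
    show G.w e = H.w e
    have heS' : e ∈ G.edges.filter fun e => e.1 ∈ S ∧ e.2 ∈ S := heS
    rw [Finset.mem_filter] at heS'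
    have heA : e ∈ (G.induce A).edges := by
      show e ∈ G.edges.filter _
      rw [Finset.mem_filter]
      exact ⟨heS'.1, hS heS'.2.1, hS heS'.2.2⟩
    exact h.2.2 e heA

lemma coincide_induce_verts_sdiff [Fintype V] (G : WDigraph V) (T : Finset V) :
    Coincide (G.induce (G.verts \ T)) (G.induce (Finset.univ \ T)) := by
  refine ⟨?_, ?_, fun _ _ => Eq.refl _⟩
  · show G.verts ∩ (G.verts \ T) = G.verts ∩ (Finset.univ \ T)
    ext x
    simp only [Finset.mem_inter, Finset.mem_sdiff, Finset.mem_univ, true_and]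
    tauto
  · show G.edges.filter _ = G.edges.filter _
    apply Finset.filter_congr
    intro e he
    have hsub := G.edges_sub he
    rw [Finset.mem_product] at hsub
    simp only [Finset.mem_sdiff, Finset.mem_univ, true_and]
    constructor
    · rintro ⟨⟨_, h1⟩, ⟨_, h2⟩⟩; exact ⟨h1, h2⟩
    · rintro ⟨h1, h2⟩; exact ⟨⟨hsub.1, h1⟩, ⟨hsub.2, h2⟩⟩

lemma isSP_induce {G : WDigraph V} {S : Finset V} {p : List V}
    (hsp : G.IsSP p) (hmem : ∀ v ∈ p, v ∈ S) : (G.induce S).IsSP p := by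
  obtain ⟨x, y, ⟨⟨⟨hne, hverts, hedges⟩, hhead, hlast⟩, hmin⟩⟩ := hsp
  refine ⟨x, y, ⟨⟨hne, ?_, ?_⟩, hhead, hlast⟩, ?_⟩
  · intro v hv
    exact Finset.mem_inter.mpr ⟨hverts v hv, hmem v hv⟩
  · intro e he
    show e ∈ G.edges.filter _
    rw [Finset.mem_filter]
    obtain ⟨h1, h2⟩ := mem_of_mem_pathEdges he
    exact ⟨hedges e he, hmem _ h1, hmem _ h2⟩
  · intro q hq
    have hqG : G.IsPathFT q x y := by
      obtain ⟨⟨hne', hverts', hedges'⟩, hh, hl⟩ := hq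
      refine ⟨⟨hne', fun v hv => ?_, fun e he => ?_⟩, hh, hl⟩
      · exact Finset.mem_inter.mp (hverts' v hv) |>.1
      · have := hedges' e he
        rw [show (G.induce S).edges = G.edges.filter _ from rfl, Finset.mem_filter] at this
        exact this.1
    show G.weight p ≤ G.weight q
    exact hmin q hqG

end WDigraph

lemma setBit_dvd {t : ℕ} : 2 ^ setBit t ∣ t :=
  Nat.findGreatest_spec (P := fun k => 2 ^ k ∣ t) (Nat.zero_le t) (by simp)

lemma setBit_le {t : ℕ} (ht : 1 ≤ t) : 2 ^ setBit t ≤ t :=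
  Nat.le_of_dvd ht setBit_dvd

lemma setBit_not_dvd {t : ℕ} (ht : 1 ≤ t) : ¬ 2 ^ (setBit t + 1) ∣ t := by
  have h1 : setBit t < t := lt_of_lt_of_le (Nat.lt_two_pow_self) (setBit_le ht)
  exact Nat.findGreatest_is_greatest (P := fun k => 2 ^ k ∣ t) (Nat.lt_succ_self _) (by omega)

lemma mem_priorTimes_iff {t τ : ℕ} :
    τ ∈ priorTimes t ↔ ∃ i, i ≤ t ∧ t.testBit i ∧ 2 ^ i * (t / 2 ^ i) = τ := by
  simp [priorTimes, Nat.lt_succ_iff, and_assoc]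

lemma self_mem_priorTimes {t : ℕ} (ht : 1 ≤ t) : t ∈ priorTimes t := by
  rw [mem_priorTimes_iff]
  refine ⟨setBit t, le_trans (Nat.le_of_lt (Nat.lt_two_pow_self)) (setBit_le ht), ?_, ?_⟩
  · rw [Nat.testBit_eq_decide_div_mod_eq, decide_eq_true_iff]
    rcases Nat.mod_two_eq_zero_or_one (t / 2 ^ setBit t) with h | h
    · exfalso
      apply setBit_not_dvd ht
      obtain ⟨k, hk⟩ := Nat.dvd_of_mod_eq_zero h
      exact ⟨k, by rw [pow_succ, mul_assoc, ← hk, Nat.mul_div_cancel' setBit_dvd]⟩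
    · exact h
  · exact Nat.mul_div_cancel' setBit_dvd

lemma le_of_mem_priorTimes {t τ : ℕ} (h : τ ∈ priorTimes t) : τ ≤ t := by
  rw [mem_priorTimes_iff] at h
  obtain ⟨i, _, _, hi⟩ := h
  rw [← hi, mul_comm]
  exact Nat.div_mul_le_self t (2 ^ i)

lemma mem_D_iff {t s : ℕ} : s ∈ D t ↔ t - 2 ^ setBit t + 1 ≤ s ∧ s ≤ t := by
  simp [D]

lemma self_mem_D {s : ℕ} (hs : 1 ≤ s) : s ∈ D s := by
  rw [mem_D_iff]
  have := Nat.one_le_two_pow (n := setBit s)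
  omega

/-- Prior times of `t - 2^(setBit t)` are prior times of `t`. -/
lemma priorTimes_sub {t τ : ℕ} (ht : 1 ≤ t)
    (h : τ ∈ priorTimes (t - 2 ^ setBit t)) : τ ∈ priorTimes t := by
  have hdvd : 2 ^ setBit t ∣ t := setBit_dvd
  have hle : 2 ^ setBit t ≤ t := setBit_le ht
  have hdvd2 : 2 ^ (setBit t + 1) ∣ t - 2 ^ setBit t := by
    obtain ⟨m, hm⟩ := hdvd
    have hmodd : ¬ 2 ∣ m := by
      intro h2m
      apply setBit_not_dvd ht
      obtain ⟨k, hk⟩ := h2m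
      exact ⟨k, by rw [pow_succ, mul_assoc, ← hk, ← hm]⟩
    have hm1 : 1 ≤ m := by
      rcases Nat.eq_zero_or_pos m with h0 | h0
      · omega
      · exact h0
    have heq : t - 2 ^ setBit t = 2 ^ setBit t * (m - 1) := by
      rw [Nat.mul_sub, Nat.mul_one, ← hm]
    rw [heq, pow_succ, mul_comm (2 ^ setBit t) 2]
    have : 2 ∣ m - 1 := by omega
    obtain ⟨k, hk⟩ := this
    exact ⟨k, by rw [hk]; ring⟩
  rw [mem_priorTimes_iff] at h ⊢
  obtain ⟨i, hit, hbit, hτ⟩ := h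
  have hipos : 0 < 2 ^ i := Nat.pow_pos (n := i) (by norm_num)
  have hisb : setBit t + 1 ≤ i := by
    by_contra hc
    push_neg at hc
    rw [Nat.testBit_eq_decide_div_mod_eq, decide_eq_true_iff] at hbit
    have hd : 2 ^ (i + 1) ∣ t - 2 ^ setBit t := dvd_trans (pow_dvd_pow 2 (by omega)) hdvd2
    obtain ⟨k, hk⟩ := hd
    rw [hk, pow_succ, mul_assoc, Nat.mul_div_cancel_left _ hipos] at hbit
    omega
  have hdiveq : t / 2 ^ i = (t - 2 ^ setBit t) / 2 ^ i := by
    have hisplit : 2 ^ i * ((t - 2 ^ setBit t) / 2 ^ i) + (t - 2 ^ setBit t) % 2 ^ i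
        = t - 2 ^ setBit t := Nat.div_add_mod _ _
    have hrlt : (t - 2 ^ setBit t) % 2 ^ i < 2 ^ i := Nat.mod_lt _ hipos
    have hrdvd : 2 ^ (setBit t + 1) ∣ (t - 2 ^ setBit t) % 2 ^ i :=
      (Nat.dvd_mod_iff (pow_dvd_pow 2 hisb)).mpr hdvd2
    have hpow : 2 ^ (setBit t + 1) = 2 * 2 ^ setBit t := by rw [pow_succ]; ring
    have hrbound : (t - 2 ^ setBit t) % 2 ^ i + 2 ^ (setBit t + 1) ≤ 2 ^ i := by
      obtain ⟨a, ha⟩ := hrdvd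
      obtain ⟨b, hb⟩ := pow_dvd_pow 2 hisb
      rw [ha, hb] at hrlt ⊢
      have hab : a < b := lt_of_mul_lt_mul_left hrlt (Nat.zero_le _)
      calc 2 ^ (setBit t + 1) * a + 2 ^ (setBit t + 1)
          = 2 ^ (setBit t + 1) * (a + 1) := by ring
        _ ≤ 2 ^ (setBit t + 1) * b := Nat.mul_le_mul_left _ (by omega)
    have hsbpos : 0 < 2 ^ setBit t := Nat.pow_pos (by norm_num)
    have hteq : t = 2 ^ i * ((t - 2 ^ setBit t) / 2 ^ i)
        + ((t - 2 ^ setBit t) % 2 ^ i + 2 ^ setBit t) := by omega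
    have hsmall : (t - 2 ^ setBit t) % 2 ^ i + 2 ^ setBit t < 2 ^ i := by omega
    conv_lhs => rw [hteq]
    rw [Nat.mul_add_div hipos, Nat.div_eq_of_lt hsmall, Nat.add_zero]
  refine ⟨i, by omega, ?_, by rw [hdiveq]; exact hτ⟩
  rw [Nat.testBit_eq_decide_div_mod_eq, decide_eq_true_iff] at hbit ⊢
  rw [hdiveq]; exact hbit

/-- Key lemma: maximal covering prior time. -/
lemma key : ∀ t s : ℕ, 1 ≤ s → s ≤ t →
    ∃ τ ∈ priorTimes t, s ∈ D τ ∧ ∀ t', t' ≤ t → s ∈ D t' → t' ≤ τ := by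
  intro t
  induction t using Nat.strong_induction_on with
  | _ t ih =>
    intro s hs hst
    have ht : 1 ≤ t := le_trans hs hst
    have h2sb : 2 ^ setBit t ≤ t := setBit_le ht
    by_cases hcase : t - 2 ^ setBit t < s
    · exact ⟨t, self_mem_priorTimes ht, mem_D_iff.mpr (by omega), fun t' h _ => h⟩
    · push_neg at hcase
      have hpos : 0 < 2 ^ setBit t := Nat.pow_pos (by norm_num)
      obtain ⟨τ, hτmem, hτD, hτmax⟩ := ih (t - 2 ^ setBit t) (by omega) s hs hcase
      refine ⟨τ, priorTimes_sub ht hτmem, hτD, ?_⟩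
      intro t' ht' hsD
      by_cases h : t' ≤ t - 2 ^ setBit t
      · exact hτmax t' h hsD
      · exfalso
        push_neg at h
        rw [mem_D_iff] at hsD
        have ht'1 : 1 ≤ t' := by omega
        have hjd : 2 ^ setBit t' ∣ t' := setBit_dvd
        have hrdvd : 2 ^ setBit t' ∣ t' - (t - 2 ^ setBit t) := by
          rcases eq_or_lt_of_le ht' with heq | hlt
          · subst heq
            have heq2 : t' - (t' - 2 ^ setBit t') = 2 ^ setBit t' := by omega
            rw [heq2]
          · have hjsb : setBit t' < setBit t := by
              by_contra hc
              push_neg at hc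
              have h1 : 2 ^ setBit t ∣ t' := dvd_trans (pow_dvd_pow 2 hc) hjd
              have h2 : 2 ^ setBit t ∣ t - 2 ^ setBit t := Nat.dvd_sub setBit_dvd dvd_rfl
              have h3 : 2 ^ setBit t ∣ t' - (t - 2 ^ setBit t) := Nat.dvd_sub h1 h2
              have h5 : 2 ^ setBit t ≤ t' - (t - 2 ^ setBit t) := Nat.le_of_dvd (by omega) h3
              omega
            have h2 : 2 ^ setBit t' ∣ t - 2 ^ setBit t :=
              dvd_trans (pow_dvd_pow 2 (le_of_lt hjsb)) (Nat.dvd_sub setBit_dvd dvd_rfl)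
            exact Nat.dvd_sub hjd h2
        have h5 : 2 ^ setBit t' ≤ t' - (t - 2 ^ setBit t) := Nat.le_of_dvd (by omega) hrdvd
        omega


open WDigraph in
/-- If every vertex of the path `p` of `G t` has been updated by step `t`,
`t_p` is the last step at which a vertex of `p` is updated, and `p` is a
shortest path in some `G t''` with `t_p ≤ t'' ≤ t`, then `t_p ∈ priorTimes t`
and `p` is a shortest path in the prior deletion graph obtained from `G t_p`
by removing the vertices `u (t_p+1), …, u t`. -/
theorem stmt12 {V : Type*} [Fintype V] [DecidableEq V] (t : ℕ) (ht : 1 ≤ t)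
    (u : ℕ → V) (G : ℕ → WDigraph V)
    (hcoin : ∀ i ∈ Finset.Icc 1 t,
      Coincide ((G (i - 1)).induce (Finset.univ \ {u i}))
        ((G i).induce (Finset.univ \ {u i})))
    (p : List V) (hp : (G t).IsPath p)
    (hupd : ∀ x ∈ p, ∃ t' ∈ Finset.Icc 1 t, ∃ s ∈ D t', 1 ≤ s ∧ u s = x)
    (hne : ((Finset.Icc 1 t).filter fun t' =>
      ∃ x ∈ p, ∃ s ∈ D t', 1 ≤ s ∧ u s = x).Nonempty)
    (tp : ℕ)
    (htp : tp = ((Finset.Icc 1 t).filter fun t' =>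
      ∃ x ∈ p, ∃ s ∈ D t', 1 ≤ s ∧ u s = x).max' hne)
    (hsp : ∃ t'', tp ≤ t'' ∧ t'' ≤ t ∧ (G t'').IsSP p) :
    tp ∈ priorTimes t ∧
      ((G tp).induce ((G tp).verts \ (Finset.Icc (tp + 1) t).image u)).IsSP p := by
  classical
  obtain ⟨⟨htp1, htpt⟩, x₀, hx₀p, s₀, hs₀D, hs₀1, hus₀⟩ :
      (1 ≤ tp ∧ tp ≤ t) ∧ ∃ x ∈ p, ∃ s ∈ D tp, 1 ≤ s ∧ u s = x := by
    have := htp ▸ Finset.max'_mem _ hne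
    rw [Finset.mem_filter, Finset.mem_Icc] at this
    exact this
  have hs₀tp : s₀ ≤ tp := (mem_D_iff.mp hs₀D).2
  obtain ⟨τ, hτPT, hτD, hτmax⟩ := key t s₀ hs₀1 (le_trans hs₀tp htpt)
  have hτF : τ ∈ (Finset.Icc 1 t).filter fun t' =>
      ∃ x ∈ p, ∃ s ∈ D t', 1 ≤ s ∧ u s = x := by
    rw [Finset.mem_filter, Finset.mem_Icc]
    exact ⟨⟨le_trans hs₀1 (mem_D_iff.mp hτD).2, le_of_mem_priorTimes hτPT⟩,
      x₀, hx₀p, s₀, hτD, hs₀1, hus₀⟩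
  have h1 : τ ≤ tp := by rw [htp]; exact Finset.le_max' _ τ hτF
  have h2 : tp ≤ τ := hτmax tp htpt hs₀D
  have htpτ : tp = τ := le_antisymm h2 h1
  -- Part 2
  have hnotT : ∀ x ∈ p, ∀ s, tp + 1 ≤ s → s ≤ t → u s ≠ x := by
    intro x hx s hs1 hs2 hux
    have hsF : s ∈ (Finset.Icc 1 t).filter fun t' =>
        ∃ x ∈ p, ∃ s' ∈ D t', 1 ≤ s' ∧ u s' = x := by
      rw [Finset.mem_filter, Finset.mem_Icc]
      exact ⟨⟨by omega, hs2⟩, x, hx, s, self_mem_D (by omega), by omega, hux⟩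
    have hle : s ≤ tp := by rw [htp]; exact Finset.le_max' _ s hsF
    omega
  set T : Finset V := (Finset.Icc (tp + 1) t).image u with hT
  set S : Finset V := Finset.univ \ T with hS
  have hmemS : ∀ x ∈ p, x ∈ S := by
    intro x hx
    rw [hS, Finset.mem_sdiff]
    refine ⟨Finset.mem_univ x, ?_⟩
    rw [hT, Finset.mem_image]
    rintro ⟨s, hsmem, hus⟩
    rw [Finset.mem_Icc] at hsmem
    exact hnotT x hx s hsmem.1 hsmem.2 hus
  have hchain : ∀ d : ℕ, tp + d ≤ t →
      Coincide ((G tp).induce S) ((G (tp + d)).induce S) := by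
    intro d
    induction d with
    | zero => intro _; exact coincide_refl
    | succ n ihn =>
      intro hle
      refine (ihn (by omega)).trans ?_
      have hmem : tp + n + 1 ∈ Finset.Icc 1 t := Finset.mem_Icc.mpr ⟨by omega, by omega⟩
      have hc := hcoin (tp + n + 1) hmem
      rw [show tp + n + 1 - 1 = tp + n from by omega] at hc
      have hsub : S ⊆ Finset.univ \ {u (tp + n + 1)} := by
        intro x hx
        rw [hS, Finset.mem_sdiff] at hx
        rw [Finset.mem_sdiff]
        refine ⟨Finset.mem_univ x, ?_⟩
        rw [Finset.mem_singleton]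
        intro hxx
        apply hx.2
        rw [hT]
        exact Finset.mem_image.mpr ⟨tp + n + 1, Finset.mem_Icc.mpr ⟨by omega, by omega⟩, hxx.symm⟩
      have hstep := coincide_induce_mono hc hsub
      rw [show tp + (n + 1) = tp + n + 1 from rfl]
      exact hstep
  obtain ⟨t'', htp'', ht''t, hspt''⟩ := hsp
  have hcc : Coincide ((G tp).induce S) ((G t'').induce S) := by
    have hch := hchain (t'' - tp) (by omega)
    rwa [show tp + (t'' - tp) = t'' from by omega] at hch
  have hSPind : ((G t'').induce S).IsSP p := isSP_induce hspt'' hmemS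
  have hSPtp : ((G tp).induce S).IsSP p := hcc.symm.isSP hSPind
  exact ⟨by rw [htpτ]; exact hτPT,
    (coincide_induce_verts_sdiff (G tp) T).symm.isSP hSPtp⟩


end Apasp
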